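/- Let L be a Lie algebra over ℚ and K = (E ⊗_ℚ L)/N a completion of L, where N is an entangled ideal. Then for every n, γₙ(K) = (E ⊗_ℚ γₙ(L) + N)/N, i.e., the n-th term of the lower central series of K is the image of E ⊗_ℚ γₙ(L) in the quotient. -/

import Mathlib

open scoped TensorProduct

/-- The underlying set of the base change of a submodule is the range of
`TensorProduct.map id subtype`. -/
lemma baseChange_coe_eq_range_map (E L : Type) [Field E] [CharZero E]
    [AddCommGroup L] [Module ℚ L] (p : Submodule ℚ L) :
    ((p.baseChange E : Submodule E (E ⊗[ℚ] L)) : Set (E ⊗[ℚ] L)) =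
      (LinearMap.range (TensorProduct.map (LinearMap.id : E →ₗ[ℚ] E) p.subtype) :
        Set (E ⊗[ℚ] L)) := by
  have hsmul : ∀ (e : E) (y : E ⊗[ℚ] (p : Type)),
      e • (TensorProduct.map (LinearMap.id : E →ₗ[ℚ] E) p.subtype) y =
        (TensorProduct.map (LinearMap.id : E →ₗ[ℚ] E) p.subtype) (e • y) := by
    intro e y
    induction y using TensorProduct.induction_on with
    | zero => simp
    | tmul a m => simp [TensorProduct.smul_tmul']
    | add x y hx hy => simp [smul_add, hx, hy]
  ext x
  simp only [SetLike.mem_coe]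
  constructor
  · intro hx
    rw [Submodule.baseChange_eq_span] at hx
    refine Submodule.span_induction ?_ ?_ ?_ ?_ hx
    · rintro - ⟨m, hm, rfl⟩
      exact ⟨(1 : E) ⊗ₜ[ℚ] (⟨m, hm⟩ : p), rfl⟩
    · exact ⟨0, by simp⟩
    · rintro x y - - ⟨u, rfl⟩ ⟨v, rfl⟩
      exact ⟨u + v, by simp⟩
    · rintro e x - ⟨u, rfl⟩
      exact ⟨e • u, (hsmul e u).symm⟩
  · rintro ⟨y, rfl⟩
    induction y using TensorProduct.induction_on with
    | zero => simp
    | tmul a m =>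
      simpa using Submodule.tmul_mem_baseChange_of_mem a m.2
    | add x y hx hy =>
      rw [map_add]; exact (p.baseChange E).add_mem hx hy

/-- For a completion `K = (E ⊗_ℚ L) ⧸ N` of the rational Lie algebra `L` by an entangled
ideal `N`, the `n`-th term of the lower central series of `K` is the image of
`E ⊗_ℚ γₙ(L)` in the quotient, i.e. `γₙ(K) = (E ⊗_ℚ γₙ(L) + N) / N`. -/
theorem lowerCentralSeries_of_completion
    (E L : Type) [Field E] [CharZero E] [LieRing L] [LieAlgebra ℚ L]
    (N : LieIdeal E (E ⊗[ℚ] L))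
    (hN : ∀ a : L, (1 : E) ⊗ₜ[ℚ] a ∈ N → a = 0) (n : ℕ) :
    ((LieModule.lowerCentralSeries E ((E ⊗[ℚ] L) ⧸ N) ((E ⊗[ℚ] L) ⧸ N) n :
        LieSubmodule E ((E ⊗[ℚ] L) ⧸ N) ((E ⊗[ℚ] L) ⧸ N)) : Set ((E ⊗[ℚ] L) ⧸ N)) =
      (LieSubmodule.Quotient.mk (N := N)) ''
        (LinearMap.range (TensorProduct.map (LinearMap.id : E →ₗ[ℚ] E)
          ((LieModule.lowerCentralSeries ℚ L L n : LieSubmodule ℚ L L) : Submodule ℚ L).subtype) :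
            Set (E ⊗[ℚ] L)) := by
  -- The quotient map as a morphism of Lie algebras.
  let mkHom : (E ⊗[ℚ] L) →ₗ⁅E⁆ (E ⊗[ℚ] L) ⧸ N :=
    { N.toSubmodule.mkQ with map_lie' := rfl }
  have hsurj : Function.Surjective mkHom := Submodule.Quotient.mk_surjective _
  have h1 : LieIdeal.map mkHom (LieModule.lowerCentralSeries E (E ⊗[ℚ] L) (E ⊗[ℚ] L) n) =
      LieModule.lowerCentralSeries E ((E ⊗[ℚ] L) ⧸ N) ((E ⊗[ℚ] L) ⧸ N) n :=
    LieIdeal.lowerCentralSeries_map_eq n hsurj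
  have h2 := LieIdeal.coe_map_of_surjective (f := mkHom)
    (I := LieModule.lowerCentralSeries E (E ⊗[ℚ] L) (E ⊗[ℚ] L) n) hsurj
  have h3 : LieModule.lowerCentralSeries E (E ⊗[ℚ] L) (E ⊗[ℚ] L) n =
      (LieModule.lowerCentralSeries ℚ L L n).baseChange E :=
    LieSubmodule.lowerCentralSeries_tensor_eq_baseChange ℚ E L L n
  rw [← h1, h3]
  have hset : ((LieIdeal.map mkHom ((LieModule.lowerCentralSeries ℚ L L n).baseChange E) :
      LieIdeal E ((E ⊗[ℚ] L) ⧸ N)) : Set ((E ⊗[ℚ] L) ⧸ N)) =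
      ⇑mkHom '' (((LieModule.lowerCentralSeries ℚ L L n).baseChange E :
        LieSubmodule E (E ⊗[ℚ] L) (E ⊗[ℚ] L)) : Set (E ⊗[ℚ] L)) := by
    rw [show ((LieIdeal.map mkHom ((LieModule.lowerCentralSeries ℚ L L n).baseChange E) :
        LieIdeal E ((E ⊗[ℚ] L) ⧸ N)) : Set ((E ⊗[ℚ] L) ⧸ N)) =
        ((LieIdeal.map mkHom ((LieModule.lowerCentralSeries ℚ L L n).baseChange E)).toSubmodule :
          Set ((E ⊗[ℚ] L) ⧸ N)) from rfl,
      LieIdeal.coe_map_of_surjective (f := mkHom) hsurj]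
    rfl
  rw [hset]
  have hfun : ⇑mkHom = (LieSubmodule.Quotient.mk (N := N)) := rfl
  rw [hfun]
  refine congrArg (Set.image (LieSubmodule.Quotient.mk (N := N))) ?_
  rw [show ((((LieModule.lowerCentralSeries ℚ L L n).baseChange E) :
        LieSubmodule E (E ⊗[ℚ] L) (E ⊗[ℚ] L)) : Set (E ⊗[ℚ] L)) =
      (((LieModule.lowerCentralSeries ℚ L L n).baseChange E :
        LieSubmodule E (E ⊗[ℚ] L) (E ⊗[ℚ] L)).toSubmodule : Set (E ⊗[ℚ] L)) from rfl,
    LieSubmodule.coe_baseChange]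
  exact baseChange_coe_eq_range_map E L _
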